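/- Let (U₁, Ũ₁) be a Golay complementary array pair of size L₁×J₁ and (U₂, Ũ₂) a Golay complementary array pair of size L₂×J₂. Then W = [U₁⊗U₂; -Ũ₁⊗(E_{L₂}Ũ₂*E_{J₂})] and W̃ = [U₁⊗Ũ₂; Ũ₁⊗(E_{L₂}U₂*E_{J₂})] of size 2L₁L₂ × J₁J₂ form a Golay complementary array pair. -/

import Mathlib

open scoped BigOperators

/-- 2D aperiodic autocorrelation of an `N₁ × N₂` array `U : ℤ → ℤ → ℂ`
(supported on `{0,…,N₁-1} × {0,…,N₂-1}`). -/
noncomputable def acf2 (N₁ N₂ : ℕ) (U : ℤ → ℤ → ℂ) (ξ₁ ξ₂ : ℤ) : ℂ :=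
  ∑ n₁ ∈ Finset.range N₁, ∑ n₂ ∈ Finset.range N₂,
    U n₁ n₂ * (starRingEnd ℂ) (U (n₁ + ξ₁) (n₂ + ξ₂))

/-- Kronecker product of arrays, where the second factor has p rows and q columns. -/
noncomputable def kron (p q : ℕ) (A B : ℤ → ℤ → ℂ) : ℤ → ℤ → ℂ :=
  fun n₁ n₂ => A (n₁ / (p : ℤ)) (n₂ / (q : ℤ)) * B (n₁ % (p : ℤ)) (n₂ % (q : ℤ))

section GolayAux

open Finset

/-- 2D aperiodic cross-correlation. -/
noncomputable def ccf2 (N₁ N₂ : ℕ) (X Y : ℤ → ℤ → ℂ) (ξ₁ ξ₂ : ℤ) : ℂ :=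
  ∑ n₁ ∈ Finset.range N₁, ∑ n₂ ∈ Finset.range N₂,
    X n₁ n₂ * (starRingEnd ℂ) (Y (n₁ + ξ₁) (n₂ + ξ₂))

lemma acf2_eq_ccf2 (N₁ N₂ : ℕ) (U : ℤ → ℤ → ℂ) : acf2 N₁ N₂ U = ccf2 N₁ N₂ U U := rfl

/-- Support predicate for a `p × q` array. -/
def Supp (p q : ℕ) (X : ℤ → ℤ → ℂ) : Prop :=
  ∀ n₁ n₂ : ℤ, (n₁ < 0 ∨ (p:ℤ) ≤ n₁ ∨ n₂ < 0 ∨ (q:ℤ) ≤ n₂) → X n₁ n₂ = 0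

/-- Conjugate-reversal of an array. -/
noncomputable def crev (p q : ℕ) (Y : ℤ → ℤ → ℂ) : ℤ → ℤ → ℂ :=
  fun i j => (starRingEnd ℂ) (Y ((p:ℤ) - 1 - i) ((q:ℤ) - 1 - j))

lemma crev_crev (p q : ℕ) (Y : ℤ → ℤ → ℂ) : crev p q (crev p q Y) = Y := by
  funext i j
  simp only [crev, RingHomCompTriple.comp_apply, Complex.conj_conj]
  norm_num

lemma crev_supp (p q : ℕ) (Y : ℤ → ℤ → ℂ) (hY : Supp p q Y) : Supp p q (crev p q Y) := by
  intro n₁ n₂ h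
  unfold crev
  rw [hY _ _ (by omega)]
  simp

lemma kron_row_supp (L J p q : ℕ) (hp : 0 < p) (P Q : ℤ → ℤ → ℂ) (hP : Supp L J P) :
    ∀ n₁ n₂ : ℤ, (((L*p : ℕ):ℤ) ≤ n₁ ∨ n₁ < 0) → kron p q P Q n₁ n₂ = 0 := by
  intro n₁ n₂ h
  unfold kron
  have hp' : (0:ℤ) < p := by exact_mod_cast hp
  rcases h with h | h
  · have : (L:ℤ) ≤ n₁ / p := by
      rw [Int.le_ediv_iff_mul_le hp']
      push_cast at h ⊢
      linarith
    rw [hP _ _ (Or.inr (Or.inl this)), zero_mul]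
  · have : n₁ / (p:ℤ) < 0 := Int.ediv_neg_of_neg_of_pos h hp'
    rw [hP _ _ (Or.inl this), zero_mul]

lemma image_range_cast (p : ℕ) :
    (range p).image (fun n : ℕ => (n:ℤ)) = Finset.Ico (0:ℤ) (p:ℤ) := by
  ext n; simp only [Finset.mem_image, Finset.mem_range, Finset.mem_Ico]
  constructor
  · rintro ⟨m, hm, rfl⟩; omega
  · intro ⟨h0, hp⟩; exact ⟨n.toNat, by omega, by omega⟩

lemma sum_Ico_int (p : ℕ) (f : ℤ → ℂ) :
    ∑ b ∈ Finset.Ico (0:ℤ) (p:ℤ), f b = ∑ b ∈ range p, f b := by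
  rw [← image_range_cast, Finset.sum_image (by intro x _ y _ h; simp only [Nat.cast_inj] at h; exact h)]

lemma sum_range_eq_Icc (p : ℕ) (lo hi : ℤ) (hlo : lo ≤ 0) (hhi : (p:ℤ) ≤ hi + 1) (f : ℤ → ℂ)
    (hf : ∀ n : ℤ, n < 0 ∨ (p:ℤ) ≤ n → f n = 0) :
    ∑ b ∈ range p, f b = ∑ b ∈ Finset.Icc lo hi, f b := by
  rw [← sum_Ico_int]
  apply Finset.sum_subset
  · intro x hx; simp only [Finset.mem_Ico] at hx; simp only [Finset.mem_Icc]; omega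
  · intro x _ hnx; apply hf; simp only [Finset.mem_Ico, not_and, not_lt] at hnx; omega

lemma sum_Icc_reflect (c lo hi : ℤ) (f : ℤ → ℂ) (h : lo + hi = c) :
    ∑ b ∈ Finset.Icc lo hi, f b = ∑ b ∈ Finset.Icc lo hi, f (c - b) := by
  refine Finset.sum_nbij' (fun b => c - b) (fun b => c - b) ?_ ?_ ?_ ?_ ?_ <;>
    intro a ha <;> simp only [Finset.mem_Icc] at * <;> first | omega | (congr 1; omega)

lemma ccf_rev (p q : ℕ) (X Y : ℤ → ℤ → ℂ) (hX : Supp p q X) (hY : Supp p q Y) (η₁ η₂ : ℤ) :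
    ccf2 p q X (crev p q Y) η₁ η₂ = ccf2 p q Y (crev p q X) η₁ η₂ := by
  set c₁ := (p:ℤ) - 1 - η₁ with hc₁
  set c₂ := (q:ℤ) - 1 - η₂ with hc₂
  have key : ∀ A B : ℤ → ℤ → ℂ,
      ccf2 p q A (crev p q B) η₁ η₂ =
        ∑ b ∈ range p, ∑ d ∈ range q, A b d * B (c₁ - b) (c₂ - d) := by
    intro A B
    refine Finset.sum_congr rfl fun b _ => Finset.sum_congr rfl fun d _ => ?_
    simp only [crev, Complex.conj_conj]
    congr 2 <;> omega
  rw [key X Y, key Y X]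
  have h1 : c₁ - (|c₁| + p) ≤ 0 := by have := le_abs_self c₁; omega
  have h1' : (p:ℤ) ≤ |c₁| + p + 1 := by have := abs_nonneg c₁; omega
  have h2 : c₂ - (|c₂| + q) ≤ 0 := by have := le_abs_self c₂; omega
  have h2' : (q:ℤ) ≤ |c₂| + q + 1 := by have := abs_nonneg c₂; omega
  have inner_ext : ∀ (A B : ℤ → ℤ → ℂ), Supp p q A → ∀ b : ℤ,
      ∑ d ∈ range q, A b d * B (c₁ - b) (c₂ - d)
        = ∑ d ∈ Finset.Icc (c₂ - (|c₂| + q)) (|c₂| + q), A b d * B (c₁ - b) (c₂ - d) := by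
    intro A B hA b
    exact sum_range_eq_Icc q _ _ h2 h2'
      (fun n => A b n * B (c₁ - b) (c₂ - n))
      (fun n hn => by simp only [hA b n (by tauto), zero_mul])
  calc ∑ b ∈ range p, ∑ d ∈ range q, X b d * Y (c₁ - b) (c₂ - d)
      = ∑ b ∈ Finset.Icc (c₁ - (|c₁| + p)) (|c₁| + p),
          ∑ d ∈ Finset.Icc (c₂ - (|c₂| + q)) (|c₂| + q), X b d * Y (c₁ - b) (c₂ - d) := by
        rw [sum_range_eq_Icc p _ _ h1 h1'
          (fun n => ∑ d ∈ range q, X n d * Y (c₁ - n) (c₂ - d))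
          (fun n hn => Finset.sum_eq_zero fun d _ => by rw [hX n d (by tauto)]; simp)]
        exact Finset.sum_congr rfl fun b _ => inner_ext X Y hX b
    _ = ∑ b ∈ Finset.Icc (c₁ - (|c₁| + p)) (|c₁| + p),
          ∑ d ∈ Finset.Icc (c₂ - (|c₂| + q)) (|c₂| + q), Y b d * X (c₁ - b) (c₂ - d) := by
        rw [sum_Icc_reflect c₁ _ _ _ (by ring)]
        refine Finset.sum_congr rfl fun b _ => ?_
        rw [sum_Icc_reflect c₂ _ _ _ (by ring)]
        refine Finset.sum_congr rfl fun d _ => ?_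
        have e1 : c₁ - (c₁ - b) = b := by ring
        have e2 : c₂ - (c₂ - d) = d := by ring
        rw [e1, e2]; ring
    _ = ∑ b ∈ range p, ∑ d ∈ range q, Y b d * X (c₁ - b) (c₂ - d) := by
        rw [show (∑ b ∈ Finset.Icc (c₁ - (|c₁| + (p:ℤ))) (|c₁| + (p:ℤ)),
              ∑ d ∈ Finset.Icc (c₂ - (|c₂| + (q:ℤ))) (|c₂| + (q:ℤ)), Y b d * X (c₁ - b) (c₂ - d))
            = ∑ b ∈ Finset.Icc (c₁ - (|c₁| + (p:ℤ))) (|c₁| + (p:ℤ)),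
              ∑ d ∈ range q, Y b d * X (c₁ - b) (c₂ - d) from
          Finset.sum_congr rfl fun b _ => (inner_ext Y X hY b).symm]
        exact (sum_range_eq_Icc p _ _ h1 h1'
          (fun n => ∑ d ∈ range q, Y n d * X (c₁ - n) (c₂ - d))
          (fun n hn => Finset.sum_eq_zero fun d _ => by rw [hY n d (by tauto)]; simp)).symm

lemma sum_range_two_mul (M : ℕ) (f : ℕ → ℂ) :
    ∑ n ∈ range (2*M), f n = ∑ n ∈ range M, f n + ∑ n ∈ range M, f (M+n) := by
  rw [two_mul, Finset.sum_range_add]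

lemma stack_acf (M N : ℕ) (A B : ℤ → ℤ → ℂ) (ε : ℂ)
    (hA : ∀ n₁ n₂ : ℤ, ((M:ℤ) ≤ n₁ ∨ n₁ < 0) → A n₁ n₂ = 0)
    (hB : ∀ n₁ n₂ : ℤ, ((M:ℤ) ≤ n₁ ∨ n₁ < 0) → B n₁ n₂ = 0)
    (ξ₁ ξ₂ : ℤ) :
    ccf2 (2*M) N (fun n₁ n₂ => if n₁ < (M:ℤ) then A n₁ n₂ else ε * B (n₁ - M) n₂)
      (fun n₁ n₂ => if n₁ < (M:ℤ) then A n₁ n₂ else ε * B (n₁ - M) n₂) ξ₁ ξ₂ =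
      ccf2 M N A A ξ₁ ξ₂ + (ε * (starRingEnd ℂ) ε) * ccf2 M N B B ξ₁ ξ₂
      + (starRingEnd ℂ) ε * ccf2 M N A B (ξ₁ - M) ξ₂
      + ε * ccf2 M N B A (ξ₁ + M) ξ₂ := by
  have hW : ∀ m n : ℤ,
      (if m < (M:ℤ) then A m n else ε * B (m - M) n) = A m n + ε * B (m - M) n := by
    intro m n
    split_ifs with h
    · rw [hB (m - M) n (Or.inr (by omega))]; ring
    · rw [hA m n (Or.inl (by omega))]; ring
  show (∑ n₁ ∈ range (2*M), ∑ n₂ ∈ range N, _) = _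
  simp only [hW]
  rw [sum_range_two_mul]
  have half1 : ∑ n₁ ∈ range M, ∑ n₂ ∈ range N,
      (A n₁ n₂ + ε * B ((n₁:ℤ) - M) n₂) *
        (starRingEnd ℂ) (A ((n₁:ℤ)+ξ₁) ((n₂:ℤ)+ξ₂) + ε * B ((n₁:ℤ)+ξ₁ - M) ((n₂:ℤ)+ξ₂))
      = ccf2 M N A A ξ₁ ξ₂ + (starRingEnd ℂ) ε * ccf2 M N A B (ξ₁ - M) ξ₂ := by
    unfold ccf2
    simp only [← Finset.sum_add_distrib, Finset.mul_sum]
    refine Finset.sum_congr rfl fun n₁ h₁ => Finset.sum_congr rfl fun n₂ h₂ => ?_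
    simp only [Finset.mem_range] at h₁
    rw [hB ((n₁:ℤ) - M) n₂ (Or.inr (by omega)),
      show ((n₁:ℤ)+(ξ₁-(M:ℤ))) = (n₁:ℤ)+ξ₁-M by ring]
    simp only [map_add, map_mul, mul_zero, add_zero]
    ring
  have half2 : ∑ n₁ ∈ range M, ∑ n₂ ∈ range N,
      (A ((M+n₁:ℕ):ℤ) n₂ + ε * B (((M+n₁:ℕ):ℤ) - M) n₂) *
        (starRingEnd ℂ) (A (((M+n₁:ℕ):ℤ)+ξ₁) ((n₂:ℤ)+ξ₂)
          + ε * B (((M+n₁:ℕ):ℤ)+ξ₁ - M) ((n₂:ℤ)+ξ₂))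
      = (ε * (starRingEnd ℂ) ε) * ccf2 M N B B ξ₁ ξ₂ + ε * ccf2 M N B A (ξ₁ + M) ξ₂ := by
    unfold ccf2
    simp only [← Finset.sum_add_distrib, Finset.mul_sum]
    refine Finset.sum_congr rfl fun n₁ h₁ => Finset.sum_congr rfl fun n₂ h₂ => ?_
    simp only [Finset.mem_range] at h₁
    rw [hA ((M+n₁:ℕ):ℤ) n₂ (Or.inl (by push_cast; omega)),
      show (((M+n₁:ℕ):ℤ) - M) = (n₁:ℤ) by push_cast; ring,
      show (((M+n₁:ℕ):ℤ)+ξ₁ - M) = (n₁:ℤ)+ξ₁ by push_cast; ring,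
      show (((M+n₁:ℕ):ℤ)+ξ₁) = (n₁:ℤ)+(ξ₁+(M:ℤ)) by push_cast; ring]
    simp only [map_add, map_mul, zero_add]
    ring
  rw [half1, half2]
  ring

lemma sum_range_mul_nested (L p : ℕ) (f : ℕ → ℂ) :
    ∑ n ∈ range (L*p), f n = ∑ a ∈ range L, ∑ b ∈ range p, f (p*a+b) := by
  induction L with
  | zero => simp
  | succ L ih =>
      rw [Nat.succ_mul, Finset.sum_range_add, ih, Finset.sum_range_succ]
      congr 1
      exact Finset.sum_congr rfl fun b _ => by rw [Nat.mul_comm L p]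

lemma quad_sum (L p J q : ℕ) (f : ℕ → ℕ → ℂ) :
    ∑ n₁ ∈ range (L*p), ∑ n₂ ∈ range (J*q), f n₁ n₂
      = ∑ a ∈ range L, ∑ c ∈ range J, ∑ b ∈ range p, ∑ d ∈ range q, f (p*a+b) (q*c+d) := by
  rw [sum_range_mul_nested L p (fun n₁ => ∑ n₂ ∈ range (J*q), f n₁ n₂)]
  refine Finset.sum_congr rfl fun a _ => ?_
  calc ∑ b ∈ range p, ∑ n₂ ∈ range (J*q), f (p*a+b) n₂
      = ∑ b ∈ range p, ∑ c ∈ range J, ∑ d ∈ range q, f (p*a+b) (q*c+d) :=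
        Finset.sum_congr rfl fun b _ => sum_range_mul_nested J q _
    _ = ∑ c ∈ range J, ∑ b ∈ range p, ∑ d ∈ range q, f (p*a+b) (q*c+d) := Finset.sum_comm

lemma sum_filter_eq_sum (s : Finset ℕ) (pred : ℕ → Prop) [DecidablePred pred] (f : ℕ → ℂ)
    (h : ∀ x ∈ s, ¬ pred x → f x = 0) :
    ∑ x ∈ s.filter pred, f x = ∑ x ∈ s, f x := by
  rw [Finset.sum_filter]
  refine Finset.sum_congr rfl fun x hx => ?_
  by_cases hpx : pred x
  · simp [hpx]
  · simp [hpx, h x hx hpx]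

lemma int_divmod_case1 (p : ℕ) (hp : 0 < p) (a b : ℕ) (ξ : ℤ) (hb : b < p)
    (h : (b:ℤ) + ξ % p < p) :
    (((p*a+b : ℕ):ℤ) + ξ) / (p:ℤ) = (a:ℤ) + ξ/p ∧
      (((p*a+b : ℕ):ℤ) + ξ) % (p:ℤ) = (b:ℤ) + ξ%p := by
  have hpz : (p:ℤ) ≠ 0 := by exact_mod_cast hp.ne'
  have h0 : 0 ≤ (b:ℤ) + ξ % p := by have := Int.emod_nonneg ξ hpz; omega
  have hdm := Int.mul_ediv_add_emod ξ (p:ℤ)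
  have key : (((p*a+b : ℕ):ℤ) + ξ) = ((b:ℤ) + ξ%p) + (p:ℤ) * ((a:ℤ) + ξ/p) := by
    push_cast; linear_combination -hdm
  constructor
  · rw [key, Int.add_mul_ediv_left _ _ hpz, Int.ediv_eq_zero_of_lt h0 h, zero_add]
  · rw [key, Int.add_mul_emod_self_left, Int.emod_eq_of_lt h0 h]

lemma int_divmod_case2 (p : ℕ) (hp : 0 < p) (a b : ℕ) (ξ : ℤ) (hb : b < p)
    (h : ¬ ((b:ℤ) + ξ % p < p)) :
    (((p*a+b : ℕ):ℤ) + ξ) / (p:ℤ) = (a:ℤ) + (ξ/p + 1) ∧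
      (((p*a+b : ℕ):ℤ) + ξ) % (p:ℤ) = (b:ℤ) + (ξ%p - p) := by
  have hpz : (p:ℤ) ≠ 0 := by exact_mod_cast hp.ne'
  push_neg at h
  have h0 : 0 ≤ (b:ℤ) + (ξ % p - p) := by omega
  have hlt : (b:ℤ) + (ξ % p - p) < p := by
    have := Int.emod_lt_of_pos ξ (show (0:ℤ) < p by exact_mod_cast hp); omega
  have hdm := Int.mul_ediv_add_emod ξ (p:ℤ)
  have key : (((p*a+b : ℕ):ℤ) + ξ) = ((b:ℤ) + (ξ%p - p)) + (p:ℤ) * ((a:ℤ) + (ξ/p + 1)) := by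
    push_cast; linear_combination -hdm
  constructor
  · rw [key, Int.add_mul_ediv_left _ _ hpz, Int.ediv_eq_zero_of_lt h0 hlt, zero_add]
  · rw [key, Int.add_mul_emod_self_left, Int.emod_eq_of_lt h0 hlt]

lemma kron_apply (p q : ℕ) (hp : 0 < p) (hq : 0 < q) (P Q : ℤ → ℤ → ℂ)
    (a b c d : ℕ) (hb : b < p) (hd : d < q) :
    kron p q P Q ((p*a+b : ℕ):ℤ) ((q*c+d : ℕ):ℤ) = P (a:ℤ) (c:ℤ) * Q (b:ℤ) (d:ℤ) := by
  have h1 := int_divmod_case1 p hp a b 0 hb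
    (by simpa using show (b:ℤ) < p by exact_mod_cast hb)
  have h2 := int_divmod_case1 q hq c d 0 hd
    (by simpa using show (d:ℤ) < q by exact_mod_cast hd)
  simp only [add_zero] at h1 h2
  unfold kron
  rw [h1.1, h1.2, h2.1, h2.2]
  simp

lemma kron_piece (p q : ℕ) (P' Q Q' : ℤ → ℤ → ℂ) (Pac : ℂ) (hQ' : Supp p q Q')
    (ξ₁ ξ₂ : ℤ) (a c : ℕ) (σ τ ρ υ : ℤ)
    (predb predd : ℕ → Prop) [DecidablePred predb] [DecidablePred predd]
    (hbcase : ∀ b : ℕ, b < p → predb b →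
       ((((p*a+b:ℕ):ℤ) + ξ₁) / (p:ℤ) = (a:ℤ) + σ ∧ (((p*a+b:ℕ):ℤ) + ξ₁) % (p:ℤ) = (b:ℤ) + ρ))
    (hdcase : ∀ d : ℕ, d < q → predd d →
       ((((q*c+d:ℕ):ℤ) + ξ₂) / (q:ℤ) = (c:ℤ) + τ ∧ (((q*c+d:ℕ):ℤ) + ξ₂) % (q:ℤ) = (d:ℤ) + υ))
    (hbout : ∀ b : ℕ, b < p → ¬ predb b → ((b:ℤ) + ρ < 0 ∨ (p:ℤ) ≤ (b:ℤ) + ρ))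
    (hdout : ∀ d : ℕ, d < q → ¬ predd d → ((d:ℤ) + υ < 0 ∨ (q:ℤ) ≤ (d:ℤ) + υ)) :
    ∑ b ∈ (range p).filter predb, ∑ d ∈ (range q).filter predd,
        (Pac * Q (b:ℤ) (d:ℤ)) *
          (starRingEnd ℂ) (kron p q P' Q' (((p*a+b:ℕ):ℤ)+ξ₁) (((q*c+d:ℕ):ℤ)+ξ₂))
      = (Pac * (starRingEnd ℂ) (P' ((a:ℤ) + σ) ((c:ℤ) + τ))) * ccf2 p q Q Q' ρ υ := by
  calc ∑ b ∈ (range p).filter predb, ∑ d ∈ (range q).filter predd,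
        (Pac * Q (b:ℤ) (d:ℤ)) *
          (starRingEnd ℂ) (kron p q P' Q' (((p*a+b:ℕ):ℤ)+ξ₁) (((q*c+d:ℕ):ℤ)+ξ₂))
      = ∑ b ∈ (range p).filter predb, ∑ d ∈ (range q).filter predd,
          (Pac * (starRingEnd ℂ) (P' ((a:ℤ) + σ) ((c:ℤ) + τ))) *
            (Q (b:ℤ) (d:ℤ) * (starRingEnd ℂ) (Q' ((b:ℤ) + ρ) ((d:ℤ) + υ))) := by
        refine Finset.sum_congr rfl fun b hb => Finset.sum_congr rfl fun d hd => ?_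
        simp only [Finset.mem_filter, Finset.mem_range] at hb hd
        obtain ⟨e1, e2⟩ := hbcase b hb.1 hb.2
        obtain ⟨e3, e4⟩ := hdcase d hd.1 hd.2
        unfold kron
        rw [e1, e2, e3, e4, map_mul]
        ring
    _ = (Pac * (starRingEnd ℂ) (P' ((a:ℤ) + σ) ((c:ℤ) + τ))) *
          ∑ b ∈ (range p).filter predb, ∑ d ∈ (range q).filter predd,
            Q (b:ℤ) (d:ℤ) * (starRingEnd ℂ) (Q' ((b:ℤ) + ρ) ((d:ℤ) + υ)) := by
        simp only [← Finset.mul_sum]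
    _ = (Pac * (starRingEnd ℂ) (P' ((a:ℤ) + σ) ((c:ℤ) + τ))) * ccf2 p q Q Q' ρ υ := by
        congr 1
        calc ∑ b ∈ (range p).filter predb, ∑ d ∈ (range q).filter predd,
              Q (b:ℤ) (d:ℤ) * (starRingEnd ℂ) (Q' ((b:ℤ) + ρ) ((d:ℤ) + υ))
            = ∑ b ∈ (range p).filter predb, ∑ d ∈ range q,
              Q (b:ℤ) (d:ℤ) * (starRingEnd ℂ) (Q' ((b:ℤ) + ρ) ((d:ℤ) + υ)) := by
              refine Finset.sum_congr rfl fun b _ => sum_filter_eq_sum _ _ _ fun d hd hnd => ?_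
              simp only [Finset.mem_range] at hd
              rcases hdout d hd hnd with h | h
              · rw [hQ' _ _ (Or.inr (Or.inr (Or.inl h)))]; simp
              · rw [hQ' _ _ (Or.inr (Or.inr (Or.inr h)))]; simp
          _ = ∑ b ∈ range p, ∑ d ∈ range q,
              Q (b:ℤ) (d:ℤ) * (starRingEnd ℂ) (Q' ((b:ℤ) + ρ) ((d:ℤ) + υ)) := by
              refine sum_filter_eq_sum _ _ _ fun b hb hnb => Finset.sum_eq_zero fun d _ => ?_
              simp only [Finset.mem_range] at hb
              rcases hbout b hb hnb with h | h
              · rw [hQ' _ _ (Or.inl h)]; simp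
              · rw [hQ' _ _ (Or.inr (Or.inl h))]; simp
          _ = ccf2 p q Q Q' ρ υ := rfl

lemma kron_ccf (L J p q : ℕ) (hp : 0 < p) (hq : 0 < q)
    (P Q P' Q' : ℤ → ℤ → ℂ) (hQ' : Supp p q Q') (ξ₁ ξ₂ : ℤ) :
    ccf2 (L*p) (J*q) (kron p q P Q) (kron p q P' Q') ξ₁ ξ₂ =
      ccf2 L J P P' (ξ₁ / p) (ξ₂ / q) * ccf2 p q Q Q' (ξ₁ % p) (ξ₂ % q)
    + ccf2 L J P P' (ξ₁ / p) (ξ₂ / q + 1) * ccf2 p q Q Q' (ξ₁ % p) (ξ₂ % q - q)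
    + ccf2 L J P P' (ξ₁ / p + 1) (ξ₂ / q) * ccf2 p q Q Q' (ξ₁ % p - p) (ξ₂ % q)
    + ccf2 L J P P' (ξ₁ / p + 1) (ξ₂ / q + 1) * ccf2 p q Q Q' (ξ₁ % p - p) (ξ₂ % q - q) := by
  have lhs_eq : ccf2 (L*p) (J*q) (kron p q P Q) (kron p q P' Q') ξ₁ ξ₂
      = ∑ a ∈ range L, ∑ c ∈ range J, ∑ b ∈ range p, ∑ d ∈ range q,
          kron p q P Q ((p*a+b : ℕ):ℤ) ((q*c+d : ℕ):ℤ) *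
            (starRingEnd ℂ) (kron p q P' Q' (((p*a+b : ℕ):ℤ)+ξ₁) (((q*c+d : ℕ):ℤ)+ξ₂)) :=
    quad_sum L p J q _
  rw [lhs_eq]
  have inner : ∀ a c : ℕ,
      ∑ b ∈ range p, ∑ d ∈ range q,
          kron p q P Q ((p*a+b : ℕ):ℤ) ((q*c+d : ℕ):ℤ) *
            (starRingEnd ℂ) (kron p q P' Q' (((p*a+b : ℕ):ℤ)+ξ₁) (((q*c+d : ℕ):ℤ)+ξ₂))
      = (P (a:ℤ) (c:ℤ) * (starRingEnd ℂ) (P' ((a:ℤ) + ξ₁/p) ((c:ℤ) + ξ₂/q)))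
            * ccf2 p q Q Q' (ξ₁%p) (ξ₂%q)
        + (P (a:ℤ) (c:ℤ) * (starRingEnd ℂ) (P' ((a:ℤ) + ξ₁/p) ((c:ℤ) + (ξ₂/q + 1))))
            * ccf2 p q Q Q' (ξ₁%p) (ξ₂%q - q)
        + (P (a:ℤ) (c:ℤ) * (starRingEnd ℂ) (P' ((a:ℤ) + (ξ₁/p + 1)) ((c:ℤ) + ξ₂/q)))
            * ccf2 p q Q Q' (ξ₁%p - p) (ξ₂%q)
        + (P (a:ℤ) (c:ℤ) * (starRingEnd ℂ) (P' ((a:ℤ) + (ξ₁/p + 1)) ((c:ℤ) + (ξ₂/q + 1))))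
            * ccf2 p q Q Q' (ξ₁%p - p) (ξ₂%q - q) := by
    intro a c
    have step1 : ∑ b ∈ range p, ∑ d ∈ range q,
        kron p q P Q ((p*a+b : ℕ):ℤ) ((q*c+d : ℕ):ℤ) *
          (starRingEnd ℂ) (kron p q P' Q' (((p*a+b : ℕ):ℤ)+ξ₁) (((q*c+d : ℕ):ℤ)+ξ₂))
        = ∑ b ∈ range p, ∑ d ∈ range q,
          (P (a:ℤ) (c:ℤ) * Q (b:ℤ) (d:ℤ)) *
            (starRingEnd ℂ) (kron p q P' Q' (((p*a+b : ℕ):ℤ)+ξ₁) (((q*c+d : ℕ):ℤ)+ξ₂)) := by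
      refine Finset.sum_congr rfl fun b hb => Finset.sum_congr rfl fun d hd => ?_
      simp only [Finset.mem_range] at hb hd
      rw [kron_apply p q hp hq P Q a b c d hb hd]
    rw [step1]
    set T : ℕ → ℕ → ℂ := fun b d =>
      (P (a:ℤ) (c:ℤ) * Q (b:ℤ) (d:ℤ)) *
        (starRingEnd ℂ) (kron p q P' Q' (((p*a+b : ℕ):ℤ)+ξ₁) (((q*c+d : ℕ):ℤ)+ξ₂)) with hT
    have bsplit : ∑ b ∈ range p, ∑ d ∈ range q, T b d
        = ∑ b ∈ (range p).filter (fun b : ℕ => (b:ℤ) + ξ₁ % p < p), ∑ d ∈ range q, T b d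
          + ∑ b ∈ (range p).filter (fun b : ℕ => ¬((b:ℤ) + ξ₁ % p < p)),
              ∑ d ∈ range q, T b d :=
      (Finset.sum_filter_add_sum_filter_not (range p) _ _).symm
    have dsplit : ∀ (s : Finset ℕ), ∑ b ∈ s, ∑ d ∈ range q, T b d
        = ∑ b ∈ s, ∑ d ∈ (range q).filter (fun d : ℕ => (d:ℤ) + ξ₂ % q < q), T b d
          + ∑ b ∈ s, ∑ d ∈ (range q).filter (fun d : ℕ => ¬((d:ℤ) + ξ₂ % q < q)), T b d := by
      intro s
      rw [← Finset.sum_add_distrib]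
      exact Finset.sum_congr rfl fun b _ =>
        (Finset.sum_filter_add_sum_filter_not (range q) _ _).symm
    rw [bsplit, dsplit, dsplit]
    have hbout1 : ∀ b : ℕ, b < p → ¬ ((b:ℤ) + ξ₁ % p < p) →
        ((b:ℤ) + ξ₁%p < 0 ∨ (p:ℤ) ≤ (b:ℤ) + ξ₁%p) := fun b _ h => by omega
    have hbout2 : ∀ b : ℕ, b < p → ¬ ¬((b:ℤ) + ξ₁ % p < p) →
        ((b:ℤ) + (ξ₁%p - p) < 0 ∨ (p:ℤ) ≤ (b:ℤ) + (ξ₁%p - p)) := fun b _ h => by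
      rw [not_not] at h; omega
    have hdout1 : ∀ d : ℕ, d < q → ¬ ((d:ℤ) + ξ₂ % q < q) →
        ((d:ℤ) + ξ₂%q < 0 ∨ (q:ℤ) ≤ (d:ℤ) + ξ₂%q) := fun d _ h => by omega
    have hdout2 : ∀ d : ℕ, d < q → ¬ ¬((d:ℤ) + ξ₂ % q < q) →
        ((d:ℤ) + (ξ₂%q - q) < 0 ∨ (q:ℤ) ≤ (d:ℤ) + (ξ₂%q - q)) := fun d _ h => by
      rw [not_not] at h; omega
    have hbcase1 : ∀ b : ℕ, b < p → ((b:ℤ) + ξ₁ % p < p) →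
        ((((p*a+b:ℕ):ℤ) + ξ₁) / (p:ℤ) = (a:ℤ) + ξ₁/p ∧
          (((p*a+b:ℕ):ℤ) + ξ₁) % (p:ℤ) = (b:ℤ) + ξ₁%p) :=
      fun b hb h => int_divmod_case1 p hp a b ξ₁ hb h
    have hbcase2 : ∀ b : ℕ, b < p → ¬((b:ℤ) + ξ₁ % p < p) →
        ((((p*a+b:ℕ):ℤ) + ξ₁) / (p:ℤ) = (a:ℤ) + (ξ₁/p + 1) ∧
          (((p*a+b:ℕ):ℤ) + ξ₁) % (p:ℤ) = (b:ℤ) + (ξ₁%p - p)) :=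
      fun b hb h => int_divmod_case2 p hp a b ξ₁ hb h
    have hdcase1 : ∀ d : ℕ, d < q → ((d:ℤ) + ξ₂ % q < q) →
        ((((q*c+d:ℕ):ℤ) + ξ₂) / (q:ℤ) = (c:ℤ) + ξ₂/q ∧
          (((q*c+d:ℕ):ℤ) + ξ₂) % (q:ℤ) = (d:ℤ) + ξ₂%q) :=
      fun d hd h => int_divmod_case1 q hq c d ξ₂ hd h
    have hdcase2 : ∀ d : ℕ, d < q → ¬((d:ℤ) + ξ₂ % q < q) →
        ((((q*c+d:ℕ):ℤ) + ξ₂) / (q:ℤ) = (c:ℤ) + (ξ₂/q + 1) ∧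
          (((q*c+d:ℕ):ℤ) + ξ₂) % (q:ℤ) = (d:ℤ) + (ξ₂%q - q)) :=
      fun d hd h => int_divmod_case2 q hq c d ξ₂ hd h
    rw [hT]
    rw [kron_piece p q P' Q Q' _ hQ' ξ₁ ξ₂ a c _ _ _ _ _ _ hbcase1 hdcase1 hbout1 hdout1,
        kron_piece p q P' Q Q' _ hQ' ξ₁ ξ₂ a c _ _ _ _ _ _ hbcase1 hdcase2 hbout1 hdout2,
        kron_piece p q P' Q Q' _ hQ' ξ₁ ξ₂ a c _ _ _ _ _ _ hbcase2 hdcase1 hbout2 hdout1,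
        kron_piece p q P' Q Q' _ hQ' ξ₁ ξ₂ a c _ _ _ _ _ _ hbcase2 hdcase2 hbout2 hdout2]
    ring
  calc ∑ a ∈ range L, ∑ c ∈ range J, ∑ b ∈ range p, ∑ d ∈ range q,
          kron p q P Q ((p*a+b : ℕ):ℤ) ((q*c+d : ℕ):ℤ) *
            (starRingEnd ℂ) (kron p q P' Q' (((p*a+b : ℕ):ℤ)+ξ₁) (((q*c+d : ℕ):ℤ)+ξ₂))
      = ∑ a ∈ range L, ∑ c ∈ range J,
          ((P (a:ℤ) (c:ℤ) * (starRingEnd ℂ) (P' ((a:ℤ) + ξ₁/p) ((c:ℤ) + ξ₂/q)))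
              * ccf2 p q Q Q' (ξ₁%p) (ξ₂%q)
          + (P (a:ℤ) (c:ℤ) * (starRingEnd ℂ) (P' ((a:ℤ) + ξ₁/p) ((c:ℤ) + (ξ₂/q + 1))))
              * ccf2 p q Q Q' (ξ₁%p) (ξ₂%q - q)
          + (P (a:ℤ) (c:ℤ) * (starRingEnd ℂ) (P' ((a:ℤ) + (ξ₁/p + 1)) ((c:ℤ) + ξ₂/q)))
              * ccf2 p q Q Q' (ξ₁%p - p) (ξ₂%q)
          + (P (a:ℤ) (c:ℤ) * (starRingEnd ℂ) (P' ((a:ℤ) + (ξ₁/p + 1)) ((c:ℤ) + (ξ₂/q + 1))))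
              * ccf2 p q Q Q' (ξ₁%p - p) (ξ₂%q - q)) :=
        Finset.sum_congr rfl fun a _ => Finset.sum_congr rfl fun c _ => inner a c
    _ = _ := by
        simp only [Finset.sum_add_distrib, ← Finset.sum_mul]
        rfl

lemma key_zero (m : ℕ) (a b : ℤ) (hm : 0 < m) (hb : 0 ≤ b) (hbm : b < m)
    (h : (m:ℤ) * a + b = 0) : a = 0 ∧ b = 0 := by
  have hm' : (0:ℤ) < m := by exact_mod_cast hm
  rcases lt_trichotomy a 0 with h' | h' | h'
  · exfalso; nlinarith
  · refine ⟨h', ?_⟩; rw [h', mul_zero] at h; omega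
  · exfalso; nlinarith

lemma endgame (L₁ J₁ L₂ J₂ : ℕ) (hL₂ : 0 < L₂) (hJ₂ : 0 < J₂) (ξ₁ ξ₂ s t r u : ℤ)
    (h1 : (L₂:ℤ) * s + r = ξ₁) (h2 : (J₂:ℤ) * t + u = ξ₂)
    (hr : 0 ≤ r) (hrl : r < L₂) (hu : 0 ≤ u) (hul : u < J₂) :
    (if s = 0 ∧ t = 0 then (2*L₁*J₁:ℂ) else 0) * (if r = 0 ∧ u = 0 then (2*L₂*J₂:ℂ) else 0)
    + (if s = 0 ∧ t+1 = 0 then (2*L₁*J₁:ℂ) else 0) *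
        (if r = 0 ∧ u - J₂ = 0 then (2*L₂*J₂:ℂ) else 0)
    + (if s+1 = 0 ∧ t = 0 then (2*L₁*J₁:ℂ) else 0) *
        (if r - L₂ = 0 ∧ u = 0 then (2*L₂*J₂:ℂ) else 0)
    + (if s+1 = 0 ∧ t+1 = 0 then (2*L₁*J₁:ℂ) else 0) *
        (if r - L₂ = 0 ∧ u - J₂ = 0 then (2*L₂*J₂:ℂ) else 0)
    = if ξ₁ = 0 ∧ ξ₂ = 0 then (4*L₁*L₂*J₁*J₂:ℂ) else 0 := by
  rw [if_neg (show ¬(r = 0 ∧ u - (J₂:ℤ) = 0) from fun ⟨_, h⟩ => by omega),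
      if_neg (show ¬(r - (L₂:ℤ) = 0 ∧ u = 0) from fun ⟨h, _⟩ => by omega),
      if_neg (show ¬(r - (L₂:ℤ) = 0 ∧ u - (J₂:ℤ) = 0) from fun ⟨h, _⟩ => by omega)]
  simp only [mul_zero, add_zero]
  by_cases hz : ξ₁ = 0 ∧ ξ₂ = 0
  · obtain ⟨hz1, hz2⟩ := hz
    rw [hz1] at h1; rw [hz2] at h2
    obtain ⟨hs, hr'⟩ := key_zero L₂ s r hL₂ hr hrl h1
    obtain ⟨ht, hu'⟩ := key_zero J₂ t u hJ₂ hu hul h2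
    rw [if_pos ⟨hs, ht⟩, if_pos ⟨hr', hu'⟩, if_pos ⟨hz1, hz2⟩]
    ring
  · rw [if_neg hz]
    by_cases hd : s = 0 ∧ t = 0
    · by_cases hm : r = 0 ∧ u = 0
      · exact absurd ⟨by rw [← h1, hd.1, hm.1, mul_zero, zero_add],
          by rw [← h2, hd.2, hm.2, mul_zero, zero_add]⟩ hz
      · rw [if_neg hm, mul_zero]
    · rw [if_neg hd, zero_mul]

end GolayAux

/-- Kronecker-product construction of a larger Golay complementary array pair from two
smaller Golay complementary array pairs (Proposition 3). -/
theorem golay_array_kron (L₁ J₁ L₂ J₂ : ℕ) (U₁ Ut₁ U₂ Ut₂ : ℤ → ℤ → ℂ)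
    (hsU₁ : ∀ n₁ n₂ : ℤ,
      (n₁ < 0 ∨ (L₁ : ℤ) ≤ n₁ ∨ n₂ < 0 ∨ (J₁ : ℤ) ≤ n₂) → U₁ n₁ n₂ = 0)
    (hsUt₁ : ∀ n₁ n₂ : ℤ,
      (n₁ < 0 ∨ (L₁ : ℤ) ≤ n₁ ∨ n₂ < 0 ∨ (J₁ : ℤ) ≤ n₂) → Ut₁ n₁ n₂ = 0)
    (hsU₂ : ∀ n₁ n₂ : ℤ,
      (n₁ < 0 ∨ (L₂ : ℤ) ≤ n₁ ∨ n₂ < 0 ∨ (J₂ : ℤ) ≤ n₂) → U₂ n₁ n₂ = 0)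
    (hsUt₂ : ∀ n₁ n₂ : ℤ,
      (n₁ < 0 ∨ (L₂ : ℤ) ≤ n₁ ∨ n₂ < 0 ∨ (J₂ : ℤ) ≤ n₂) → Ut₂ n₁ n₂ = 0)
    (hmU₁ : ∀ n₁ n₂ : ℤ, 0 ≤ n₁ → n₁ < (L₁ : ℤ) → 0 ≤ n₂ → n₂ < (J₁ : ℤ) →
      ‖U₁ n₁ n₂‖ = 1)
    (hmUt₁ : ∀ n₁ n₂ : ℤ, 0 ≤ n₁ → n₁ < (L₁ : ℤ) → 0 ≤ n₂ → n₂ < (J₁ : ℤ) →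
      ‖Ut₁ n₁ n₂‖ = 1)
    (hmU₂ : ∀ n₁ n₂ : ℤ, 0 ≤ n₁ → n₁ < (L₂ : ℤ) → 0 ≤ n₂ → n₂ < (J₂ : ℤ) →
      ‖U₂ n₁ n₂‖ = 1)
    (hmUt₂ : ∀ n₁ n₂ : ℤ, 0 ≤ n₁ → n₁ < (L₂ : ℤ) → 0 ≤ n₂ → n₂ < (J₂ : ℤ) →
      ‖Ut₂ n₁ n₂‖ = 1)
    (hG₁ : ∀ ξ₁ ξ₂ : ℤ,
      acf2 L₁ J₁ U₁ ξ₁ ξ₂ + acf2 L₁ J₁ Ut₁ ξ₁ ξ₂ =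
        if ξ₁ = 0 ∧ ξ₂ = 0 then (2 * L₁ * J₁ : ℂ) else 0)
    (hG₂ : ∀ ξ₁ ξ₂ : ℤ,
      acf2 L₂ J₂ U₂ ξ₁ ξ₂ + acf2 L₂ J₂ Ut₂ ξ₁ ξ₂ =
        if ξ₁ = 0 ∧ ξ₂ = 0 then (2 * L₂ * J₂ : ℂ) else 0) :
    ∀ ξ₁ ξ₂ : ℤ,
      acf2 (2 * L₁ * L₂) (J₁ * J₂)
          (fun n₁ n₂ => if n₁ < (L₁ * L₂ : ℤ) then kron L₂ J₂ U₁ U₂ n₁ n₂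
            else -(kron L₂ J₂ Ut₁
              (fun i j => (starRingEnd ℂ) (Ut₂ ((L₂ : ℤ) - 1 - i) ((J₂ : ℤ) - 1 - j)))
              (n₁ - L₁ * L₂) n₂)) ξ₁ ξ₂ +
        acf2 (2 * L₁ * L₂) (J₁ * J₂)
          (fun n₁ n₂ => if n₁ < (L₁ * L₂ : ℤ) then kron L₂ J₂ U₁ Ut₂ n₁ n₂
            else kron L₂ J₂ Ut₁
              (fun i j => (starRingEnd ℂ) (U₂ ((L₂ : ℤ) - 1 - i) ((J₂ : ℤ) - 1 - j)))
              (n₁ - L₁ * L₂) n₂) ξ₁ ξ₂ =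
      if ξ₁ = 0 ∧ ξ₂ = 0 then (4 * L₁ * L₂ * J₁ * J₂ : ℂ) else 0 := by
  intro ξ₁ ξ₂
  rcases Nat.eq_zero_or_pos L₁ with hL₁ | hL₁
  · subst hL₁; simp [acf2]
  rcases Nat.eq_zero_or_pos J₁ with hJ₁ | hJ₁
  · subst hJ₁; simp [acf2]
  rcases Nat.eq_zero_or_pos L₂ with hL₂ | hL₂
  · subst hL₂; simp [acf2]
  rcases Nat.eq_zero_or_pos J₂ with hJ₂ | hJ₂
  · subst hJ₂; simp [acf2]
  -- main case
  have hcast : ((L₁*L₂ : ℕ):ℤ) = (L₁:ℤ)*(L₂:ℤ) := by push_cast; ring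
  have hW1 : (fun n₁ n₂ : ℤ => if n₁ < (L₁ * L₂ : ℤ) then kron L₂ J₂ U₁ U₂ n₁ n₂
        else -(kron L₂ J₂ Ut₁
          (fun i j => (starRingEnd ℂ) (Ut₂ ((L₂ : ℤ) - 1 - i) ((J₂ : ℤ) - 1 - j)))
          (n₁ - L₁ * L₂) n₂))
      = (fun n₁ n₂ : ℤ => if n₁ < ((L₁*L₂ : ℕ):ℤ) then kron L₂ J₂ U₁ U₂ n₁ n₂
        else (-1:ℂ) * kron L₂ J₂ Ut₁ (crev L₂ J₂ Ut₂) (n₁ - ((L₁*L₂:ℕ):ℤ)) n₂) := by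
    funext n₁ n₂
    rw [hcast, neg_one_mul]
    rfl
  have hW2 : (fun n₁ n₂ : ℤ => if n₁ < (L₁ * L₂ : ℤ) then kron L₂ J₂ U₁ Ut₂ n₁ n₂
        else kron L₂ J₂ Ut₁
          (fun i j => (starRingEnd ℂ) (U₂ ((L₂ : ℤ) - 1 - i) ((J₂ : ℤ) - 1 - j)))
          (n₁ - L₁ * L₂) n₂)
      = (fun n₁ n₂ : ℤ => if n₁ < ((L₁*L₂ : ℕ):ℤ) then kron L₂ J₂ U₁ Ut₂ n₁ n₂
        else (1:ℂ) * kron L₂ J₂ Ut₁ (crev L₂ J₂ U₂) (n₁ - ((L₁*L₂:ℕ):ℤ)) n₂) := by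
    funext n₁ n₂
    rw [hcast, one_mul]
    rfl
  rw [mul_assoc 2 L₁ L₂, hW1, hW2]
  simp only [acf2_eq_ccf2]
  rw [stack_acf (L₁*L₂) (J₁*J₂) (kron L₂ J₂ U₁ U₂) (kron L₂ J₂ Ut₁ (crev L₂ J₂ Ut₂)) (-1)
      (kron_row_supp L₁ J₁ L₂ J₂ hL₂ U₁ U₂ hsU₁)
      (kron_row_supp L₁ J₁ L₂ J₂ hL₂ Ut₁ (crev L₂ J₂ Ut₂) hsUt₁) ξ₁ ξ₂,
    stack_acf (L₁*L₂) (J₁*J₂) (kron L₂ J₂ U₁ Ut₂) (kron L₂ J₂ Ut₁ (crev L₂ J₂ U₂)) (1)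
      (kron_row_supp L₁ J₁ L₂ J₂ hL₂ U₁ Ut₂ hsU₁)
      (kron_row_supp L₁ J₁ L₂ J₂ hL₂ Ut₁ (crev L₂ J₂ U₂) hsUt₁) ξ₁ ξ₂]
  simp only [map_neg, map_one, neg_neg, one_mul, mul_one, neg_one_mul]
  -- cross-term equality
  have cross1 : ∀ η₁ η₂ : ℤ,
      ccf2 (L₁*L₂) (J₁*J₂) (kron L₂ J₂ U₁ U₂) (kron L₂ J₂ Ut₁ (crev L₂ J₂ Ut₂)) η₁ η₂
      = ccf2 (L₁*L₂) (J₁*J₂) (kron L₂ J₂ U₁ Ut₂) (kron L₂ J₂ Ut₁ (crev L₂ J₂ U₂)) η₁ η₂ := by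
    intro η₁ η₂
    rw [kron_ccf L₁ J₁ L₂ J₂ hL₂ hJ₂ U₁ U₂ Ut₁ (crev L₂ J₂ Ut₂)
        (crev_supp L₂ J₂ Ut₂ hsUt₂) η₁ η₂,
      kron_ccf L₁ J₁ L₂ J₂ hL₂ hJ₂ U₁ Ut₂ Ut₁ (crev L₂ J₂ U₂)
        (crev_supp L₂ J₂ U₂ hsU₂) η₁ η₂]
    simp only [ccf_rev L₂ J₂ U₂ Ut₂ hsU₂ hsUt₂]
  have hrev2 : ∀ ρ υ : ℤ, ccf2 L₂ J₂ (crev L₂ J₂ Ut₂) U₂ ρ υ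
      = ccf2 L₂ J₂ (crev L₂ J₂ U₂) Ut₂ ρ υ := by
    intro ρ υ
    have := ccf_rev L₂ J₂ (crev L₂ J₂ Ut₂) (crev L₂ J₂ U₂)
      (crev_supp L₂ J₂ Ut₂ hsUt₂) (crev_supp L₂ J₂ U₂ hsU₂) ρ υ
    rwa [crev_crev, crev_crev] at this
  have cross2 : ∀ η₁ η₂ : ℤ,
      ccf2 (L₁*L₂) (J₁*J₂) (kron L₂ J₂ Ut₁ (crev L₂ J₂ Ut₂)) (kron L₂ J₂ U₁ U₂) η₁ η₂
      = ccf2 (L₁*L₂) (J₁*J₂) (kron L₂ J₂ Ut₁ (crev L₂ J₂ U₂)) (kron L₂ J₂ U₁ Ut₂) η₁ η₂ := by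
    intro η₁ η₂
    rw [kron_ccf L₁ J₁ L₂ J₂ hL₂ hJ₂ Ut₁ (crev L₂ J₂ Ut₂) U₁ U₂ hsU₂ η₁ η₂,
      kron_ccf L₁ J₁ L₂ J₂ hL₂ hJ₂ Ut₁ (crev L₂ J₂ U₂) U₁ Ut₂ hsUt₂ η₁ η₂]
    simp only [hrev2]
  rw [cross1 (ξ₁ - ((L₁*L₂:ℕ):ℤ)) ξ₂, cross2 (ξ₁ + ((L₁*L₂:ℕ):ℤ)) ξ₂]
  -- expand the four autocorrelation-type terms
  have hVV : ∀ ρ υ : ℤ, ccf2 L₂ J₂ (crev L₂ J₂ Ut₂) (crev L₂ J₂ Ut₂) ρ υ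
      = ccf2 L₂ J₂ Ut₂ Ut₂ ρ υ := by
    intro ρ υ
    have := ccf_rev L₂ J₂ (crev L₂ J₂ Ut₂) Ut₂ (crev_supp L₂ J₂ Ut₂ hsUt₂) hsUt₂ ρ υ
    rwa [crev_crev] at this
  have hV'V' : ∀ ρ υ : ℤ, ccf2 L₂ J₂ (crev L₂ J₂ U₂) (crev L₂ J₂ U₂) ρ υ
      = ccf2 L₂ J₂ U₂ U₂ ρ υ := by
    intro ρ υ
    have := ccf_rev L₂ J₂ (crev L₂ J₂ U₂) U₂ (crev_supp L₂ J₂ U₂ hsU₂) hsU₂ ρ υ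
    rwa [crev_crev] at this
  rw [kron_ccf L₁ J₁ L₂ J₂ hL₂ hJ₂ U₁ U₂ U₁ U₂ hsU₂ ξ₁ ξ₂,
    kron_ccf L₁ J₁ L₂ J₂ hL₂ hJ₂ U₁ Ut₂ U₁ Ut₂ hsUt₂ ξ₁ ξ₂,
    kron_ccf L₁ J₁ L₂ J₂ hL₂ hJ₂ Ut₁ (crev L₂ J₂ Ut₂) Ut₁ (crev L₂ J₂ Ut₂)
      (crev_supp L₂ J₂ Ut₂ hsUt₂) ξ₁ ξ₂,
    kron_ccf L₁ J₁ L₂ J₂ hL₂ hJ₂ Ut₁ (crev L₂ J₂ U₂) Ut₁ (crev L₂ J₂ U₂)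
      (crev_supp L₂ J₂ U₂ hsU₂) ξ₁ ξ₂]
  simp only [hVV, hV'V']
  -- combine using the Golay hypotheses
  have comb : ∀ σ τ ρ υ : ℤ,
      ccf2 L₁ J₁ U₁ U₁ σ τ * ccf2 L₂ J₂ U₂ U₂ ρ υ
    + ccf2 L₁ J₁ U₁ U₁ σ τ * ccf2 L₂ J₂ Ut₂ Ut₂ ρ υ
    + ccf2 L₁ J₁ Ut₁ Ut₁ σ τ * ccf2 L₂ J₂ Ut₂ Ut₂ ρ υ
    + ccf2 L₁ J₁ Ut₁ Ut₁ σ τ * ccf2 L₂ J₂ U₂ U₂ ρ υ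
    = (if σ = 0 ∧ τ = 0 then (2*L₁*J₁:ℂ) else 0)
        * (if ρ = 0 ∧ υ = 0 then (2*L₂*J₂:ℂ) else 0) := by
    intro σ τ ρ υ
    have g1 := hG₁ σ τ
    have g2 := hG₂ ρ υ
    simp only [acf2_eq_ccf2] at g1 g2
    linear_combination (ccf2 L₂ J₂ U₂ U₂ ρ υ + ccf2 L₂ J₂ Ut₂ Ut₂ ρ υ) * g1
      + (if σ = 0 ∧ τ = 0 then (2*L₁*J₁:ℂ) else 0) * g2
  have hL₂' : ((L₂:ℤ)) ≠ 0 := by exact_mod_cast hL₂.ne'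
  have hJ₂' : ((J₂:ℤ)) ≠ 0 := by exact_mod_cast hJ₂.ne'
  rw [← endgame L₁ J₁ L₂ J₂ hL₂ hJ₂ ξ₁ ξ₂ (ξ₁/(L₂:ℤ)) (ξ₂/(J₂:ℤ)) (ξ₁%(L₂:ℤ)) (ξ₂%(J₂:ℤ))
      (Int.mul_ediv_add_emod ξ₁ (L₂:ℤ)) (Int.mul_ediv_add_emod ξ₂ (J₂:ℤ))
      (Int.emod_nonneg ξ₁ hL₂') (Int.emod_lt_of_pos ξ₁ (by exact_mod_cast hL₂))
      (Int.emod_nonneg ξ₂ hJ₂') (Int.emod_lt_of_pos ξ₂ (by exact_mod_cast hJ₂))]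
  linear_combination comb (ξ₁/(L₂:ℤ)) (ξ₂/(J₂:ℤ)) (ξ₁%(L₂:ℤ)) (ξ₂%(J₂:ℤ))
    + comb (ξ₁/(L₂:ℤ)) (ξ₂/(J₂:ℤ)+1) (ξ₁%(L₂:ℤ)) (ξ₂%(J₂:ℤ)-(J₂:ℤ))
    + comb (ξ₁/(L₂:ℤ)+1) (ξ₂/(J₂:ℤ)) (ξ₁%(L₂:ℤ)-(L₂:ℤ)) (ξ₂%(J₂:ℤ))
    + comb (ξ₁/(L₂:ℤ)+1) (ξ₂/(J₂:ℤ)+1) (ξ₁%(L₂:ℤ)-(L₂:ℤ)) (ξ₂%(J₂:ℤ)-(J₂:ℤ))
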